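/- Let n ≥ 1 and let M^{n+1} = ℝ × ℝⁿ be the Minkowski Jordan algebra with product (x,v) · (y,w) = (xy + ⟨v,w⟩, xw + yv). Let α be a bijective ℝ-linear map on M^{n+1} with α(z · w) = α(z) · α(w) for all z, w. Then: (i) α(1,0) = (1,0); (ii) α maps the subspace W := {0} × ℝⁿ onto itself; (iii) the restriction of α to W is a linear isometry, i.e. ‖α(0,v)‖ = ‖(0,v)‖ for all v ∈ ℝⁿ. Conversely, for every orthogonal linear map g of ℝⁿ, the map (x,v) ↦ (x, g(v)) is a bijective ℝ-linear multiplicative map of M^{n+1}; consequently, restriction to W defines a group isomorphism from the automorphism group of M^{n+1} onto the orthogonal group O_n(ℝ). -/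

import Mathlib

open RealInnerProductSpace

/-- The product of the Minkowski (spin factor) Jordan algebra `M^{n+1} = ℝ × ℝⁿ`:
`(x,v) · (y,w) = (xy + ⟨v,w⟩, xw + yv)`. -/
noncomputable def mprod {n : ℕ} (z w : ℝ × EuclideanSpace ℝ (Fin n)) :
    ℝ × EuclideanSpace ℝ (Fin n) :=
  (z.1 * w.1 + ⟪z.2, w.2⟫, z.1 • w.2 + w.1 • z.2)

section aux
variable {n : ℕ}
local notation "E" => EuclideanSpace ℝ (Fin n)

lemma mprod_one (z : ℝ × E) : mprod (1, 0) z = z := by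
  simp [mprod]

lemma mprod_one' (z : ℝ × E) : mprod z (1, 0) = z := by
  simp [mprod]

lemma aux_unit (β : (ℝ × E) ≃ₗ[ℝ] (ℝ × E))
    (hβ : ∀ z w, β (mprod z w) = mprod (β z) (β w)) :
    β ((1 : ℝ), (0 : E)) = (1, 0) := by
  have h1 : mprod (β (1,0)) ((1 : ℝ), (0 : E)) = (1, 0) := by
    have h := hβ (1,0) (β.symm (1,0))
    rw [mprod_one, β.apply_symm_apply] at h
    exact h.symm
  rw [mprod_one'] at h1
  exact h1

lemma aux_fst (β : (ℝ × E) ≃ₗ[ℝ] (ℝ × E))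
    (hβ : ∀ z w, β (mprod z w) = mprod (β z) (β w)) (v : E) :
    (β (0, v)).1 = 0 ∧ ‖(β (0, v)).2‖ = ‖v‖ := by
  set a := (β ((0 : ℝ), v)).1 with ha
  set w := (β ((0 : ℝ), v)).2 with hw
  have hsq : mprod ((0 : ℝ), v) (0, v) = (‖v‖ ^ 2, 0) := by
    simp only [mprod, zero_mul, zero_add, zero_smul, add_zero, real_inner_self_eq_norm_sq]
  have hmul := hβ (0, v) (0, v)
  rw [hsq] at hmul
  have hsc : β ((‖v‖ ^ 2 : ℝ), (0 : E)) = (‖v‖ ^ 2, 0) := by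
    have : ((‖v‖ ^ 2 : ℝ), (0 : E)) = (‖v‖ ^ 2 : ℝ) • ((1 : ℝ), (0 : E)) := by
      simp
    rw [this, map_smul, aux_unit β hβ]
    try simp
  rw [hsc] at hmul
  have hβv : β ((0 : ℝ), v) = (a, w) := rfl
  rw [hβv] at hmul
  have hmul2 : ((‖v‖ ^ 2 : ℝ), (0 : E)) = (a * a + ⟪w, w⟫, a • w + a • w) := by
    rw [hmul]; simp only [mprod]
  have h1 : a * a + ⟪w, w⟫ = ‖v‖ ^ 2 := ((Prod.ext_iff.mp hmul2).1).symm
  have h2 : a • w + a • w = 0 := ((Prod.ext_iff.mp hmul2).2).symm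
  have ha0 : a = 0 := by
    by_contra hne
    have hw0 : w = 0 := by
      have : (2 * a) • w = 0 := by rw [two_mul, add_smul]; exact h2
      rcases smul_eq_zero.mp this with h | h
      · rcases mul_eq_zero.mp h with h' | h'
        · norm_num at h'
        · exact absurd h' hne
      · exact h
    have : β ((0 : ℝ), v) = β ((a : ℝ), (0 : E)) := by
      rw [hβv, hw0]
      have : β ((a : ℝ), (0 : E)) = a • β ((1 : ℝ), (0 : E)) := by
        rw [← map_smul]; congr 1; simp
      rw [this, aux_unit β hβ]; simp
    have := β.injective this
    exact hne (congrArg Prod.fst this).symm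
  refine ⟨ha0, ?_⟩
  rw [ha0] at h1
  have hsq2 : ‖w‖ ^ 2 = ‖v‖ ^ 2 := by
    rw [← real_inner_self_eq_norm_sq]; linarith
  rw [← Real.sqrt_sq (norm_nonneg w), ← Real.sqrt_sq (norm_nonneg v), hsq2]

end aux

section aux2
variable {n : ℕ}
local notation "E" => EuclideanSpace ℝ (Fin n)

lemma aux_symm (β : (ℝ × E) ≃ₗ[ℝ] (ℝ × E))
    (hβ : ∀ z w, β (mprod z w) = mprod (β z) (β w)) :
    ∀ z w, β.symm (mprod z w) = mprod (β.symm z) (β.symm w) := by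
  intro z w
  apply β.injective
  rw [β.apply_symm_apply, hβ, β.apply_symm_apply, β.apply_symm_apply]

end aux2


/-- Example 2.28: every automorphism `α` of `M^{n+1}` fixes the unit `(1,0)`, maps the
subspace `W = {0} × ℝⁿ` onto itself and restricts to a linear isometry of `W`;
conversely every orthogonal map of `ℝⁿ` extends to an automorphism.  Consequently,
restriction to `W` is a bijection from the automorphism group of `M^{n+1}` onto the
orthogonal group `O_n(ℝ)`. -/
theorem minkowski_automorphisms (n : ℕ) (hn : 1 ≤ n)
    (α : (ℝ × EuclideanSpace ℝ (Fin n)) ≃ₗ[ℝ] (ℝ × EuclideanSpace ℝ (Fin n)))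
    (hα : ∀ z w, α (mprod z w) = mprod (α z) (α w)) :
    α ((1 : ℝ), (0 : EuclideanSpace ℝ (Fin n))) = (1, 0) ∧
    (α '' {p : ℝ × EuclideanSpace ℝ (Fin n) | p.1 = 0}
      = {p : ℝ × EuclideanSpace ℝ (Fin n) | p.1 = 0}) ∧
    (∀ v : EuclideanSpace ℝ (Fin n), ‖(α ((0 : ℝ), v)).2‖ = ‖v‖) ∧
    (∀ f : EuclideanSpace ℝ (Fin n) ≃ₗᵢ[ℝ] EuclideanSpace ℝ (Fin n),
      ∃ β : (ℝ × EuclideanSpace ℝ (Fin n)) ≃ₗ[ℝ] (ℝ × EuclideanSpace ℝ (Fin n)),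
        (∀ p : ℝ × EuclideanSpace ℝ (Fin n), β p = (p.1, f p.2)) ∧
        ∀ z w, β (mprod z w) = mprod (β z) (β w)) ∧
    (∃! f : EuclideanSpace ℝ (Fin n) ≃ₗᵢ[ℝ] EuclideanSpace ℝ (Fin n),
      ∀ v : EuclideanSpace ℝ (Fin n), α ((0 : ℝ), v) = (0, f v)) ∧
    (∀ β : (ℝ × EuclideanSpace ℝ (Fin n)) ≃ₗ[ℝ] (ℝ × EuclideanSpace ℝ (Fin n)),
      (∀ z w, β (mprod z w) = mprod (β z) (β w)) →
      (∀ v : EuclideanSpace ℝ (Fin n), β ((0 : ℝ), v) = α ((0 : ℝ), v)) → β = α) := by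
  have hsymm := aux_symm α hα
  refine ⟨aux_unit α hα, ?_, fun v => (aux_fst α hα v).2, ?_, ?_, ?_⟩
  · ext p
    constructor
    · rintro ⟨q, hq, rfl⟩
      have hq' : q = ((0 : ℝ), q.2) := by
        ext
        · exact hq
        · rfl
      rw [hq']
      exact (aux_fst α hα q.2).1
    · intro hp
      refine ⟨α.symm p, ?_, α.apply_symm_apply p⟩
      have hp' : p = ((0 : ℝ), p.2) := by
        ext
        · exact hp
        · rfl
      rw [hp']
      exact (aux_fst α.symm hsymm p.2).1
  · intro f
    refine ⟨LinearEquiv.prodCongr (LinearEquiv.refl ℝ ℝ) f.toLinearEquiv, fun p => rfl, ?_⟩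
    intro z w
    simp only [mprod, LinearEquiv.prodCongr_apply, LinearEquiv.refl_apply,
      LinearIsometryEquiv.coe_toLinearEquiv, map_add, map_smul, f.inner_map_map]
  · -- existence and uniqueness of f
    have key : ∀ v : EuclideanSpace ℝ (Fin n),
        ((0 : ℝ), (α ((0 : ℝ), v)).2) = α ((0 : ℝ), v) := by
      intro v
      ext
      · exact ((aux_fst α hα v).1).symm
      · rfl
    have key' : ∀ v : EuclideanSpace ℝ (Fin n),
        ((0 : ℝ), (α.symm ((0 : ℝ), v)).2) = α.symm ((0 : ℝ), v) := by
      intro v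
      ext
      · exact ((aux_fst α.symm hsymm v).1).symm
      · rfl
    let F : EuclideanSpace ℝ (Fin n) →ₗ[ℝ] EuclideanSpace ℝ (Fin n) :=
      (LinearMap.snd ℝ ℝ _) ∘ₗ α.toLinearMap ∘ₗ (LinearMap.inr ℝ ℝ _)
    let G : EuclideanSpace ℝ (Fin n) →ₗ[ℝ] EuclideanSpace ℝ (Fin n) :=
      (LinearMap.snd ℝ ℝ _) ∘ₗ α.symm.toLinearMap ∘ₗ (LinearMap.inr ℝ ℝ _)
    have hFG : ∀ v, F (G v) = v := by
      intro v
      show (α ((0 : ℝ), (α.symm ((0 : ℝ), v)).2)).2 = v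
      rw [key', α.apply_symm_apply]
    have hGF : ∀ v, G (F v) = v := by
      intro v
      show (α.symm ((0 : ℝ), (α ((0 : ℝ), v)).2)).2 = v
      rw [key, α.symm_apply_apply]
    let fe : EuclideanSpace ℝ (Fin n) ≃ₗ[ℝ] EuclideanSpace ℝ (Fin n) :=
      LinearEquiv.ofLinear F G (LinearMap.ext hFG) (LinearMap.ext hGF)
    refine ⟨⟨fe, fun v => (aux_fst α hα v).2⟩, ?_, ?_⟩
    · intro v
      exact (key v).symm
    · intro g hg
      apply LinearIsometryEquiv.ext
      intro v
      have := hg v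
      have h2 : (α ((0 : ℝ), v)).2 = g v := by rw [this]
      exact h2.symm ▸ rfl
  · intro β hβ hW
    apply LinearEquiv.ext
    intro p
    have hp : p = p.1 • ((1 : ℝ), (0 : EuclideanSpace ℝ (Fin n))) + ((0 : ℝ), p.2) := by
      ext
      · simp
      · simp
    rw [hp, map_add, map_add, map_smul, map_smul, aux_unit β hβ, aux_unit α hα, hW]
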